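/- Let G be a graph whose vertices all have degree at most d, let A be a finite set of vertices with |∂A| < ε|A| where ∂A is the set of vertices of A adjacent to a vertex outside A, and let B ⊆ A with |B| > (1−ε)|A|. Then |∂B| < (d+1)·(ε/(1−ε))·|B|. -/
import Mathlib


open Finset

/-- The inner vertex boundary of a finite vertex set: vertices of `F`
adjacent to some vertex outside `F`. -/
def innerBoundary {V : Type*} [Fintype V] [DecidableEq V] (G : SimpleGraph V)
    [DecidableRel G.Adj] (F : Finset V) : Finset V :=
  F.filter (fun x => ∃ y ∉ F, G.Adj x y)

theorem boundary_of_large_subset {V : Type*} [Fintype V] [DecidableEq V]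
    (G : SimpleGraph V) [DecidableRel G.Adj] (d : ℕ)
    (hdeg : ∀ v, G.degree v ≤ d) (ε : ℝ) (hε0 : 0 < ε) (hε1 : ε < 1)
    (A B : Finset V) (hBA : B ⊆ A)
    (hA : ((innerBoundary G A).card : ℝ) < ε * A.card)
    (hB : (1 - ε) * A.card < (B.card : ℝ)) :
    ((innerBoundary G B).card : ℝ) < (d + 1) * (ε / (1 - ε)) * B.card := by
  have h1ε : (0:ℝ) < 1 - ε := by linarith
  have hsub : innerBoundary G B ⊆
      innerBoundary G A ∪ (A \ B).biUnion (fun y => G.neighborFinset y) := by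
    intro x hx
    simp only [innerBoundary, mem_filter] at hx
    obtain ⟨hxB, y, hyB, hadj⟩ := hx
    by_cases hyA : y ∈ A
    · exact mem_union_right _ (mem_biUnion.2 ⟨y, mem_sdiff.2 ⟨hyA, hyB⟩,
        (G.mem_neighborFinset _ _).2 hadj.symm⟩)
    · exact mem_union_left _ (mem_filter.2 ⟨hBA hxB, y, hyA, hadj⟩)
  have hbi : ((A \ B).biUnion (fun y => G.neighborFinset y)).card ≤ d * (A \ B).card := by
    calc ((A \ B).biUnion (fun y => G.neighborFinset y)).card
        ≤ ∑ y ∈ A \ B, (G.neighborFinset y).card := card_biUnion_le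
      _ ≤ ∑ y ∈ A \ B, d := sum_le_sum (fun y _ => by
          rw [G.card_neighborFinset_eq_degree]; exact hdeg y)
      _ = d * (A \ B).card := by rw [sum_const, smul_eq_mul, mul_comm]
  have hcard : (innerBoundary G B).card ≤ (innerBoundary G A).card + d * (A \ B).card :=
    (card_le_card hsub).trans ((card_union_le _ _).trans (by omega))
  have hAB : ((A \ B).card : ℝ) = (A.card : ℝ) - B.card := by
    rw [card_sdiff_of_subset hBA, Nat.cast_sub (card_le_card hBA)]
  have hcardR : ((innerBoundary G B).card : ℝ) ≤
      ((innerBoundary G A).card : ℝ) + d * ((A.card : ℝ) - B.card) := by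
    rw [← hAB]; exact_mod_cast hcard
  have hdiff : (A.card : ℝ) - B.card < ε * A.card := by linarith
  have hkey : ((innerBoundary G B).card : ℝ) < (d + 1) * ε * A.card := by
    have hd0 : (0:ℝ) ≤ d := Nat.cast_nonneg d
    nlinarith
  have hA2 : (A.card : ℝ) < (B.card : ℝ) / (1 - ε) := by
    rw [lt_div_iff₀ h1ε]; nlinarith
  calc ((innerBoundary G B).card : ℝ) < ((d:ℝ) + 1) * ε * A.card := hkey
    _ < ((d:ℝ) + 1) * ε * ((B.card : ℝ) / (1 - ε)) :=
        mul_lt_mul_of_pos_left hA2 (by positivity)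
    _ = (d + 1) * (ε / (1 - ε)) * B.card := by field_simp
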